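/- Let n be a natural number, H : (Fin n → ℝ) → (Fin n → ℝ) → ℝ a differentiable function, and q, p : ℝ → (Fin n → ℝ) differentiable curves satisfying p_i'(t) = −(∂H/∂q_i)(q(t),p(t)) + F_i(t) and q_i'(t) = (∂H/∂p_i)(q(t),p(t)) for all t and i, where F : ℝ → (Fin n → ℝ). Suppose there are differentiable functions W_i : ℝ → ℝ with W_i'(q_i(t)) = F_i(t) for all t and i, and set Ĥ(q,p) = H(q,p) − Σ_i W_i(q_i). Then Ĥ is constant along the curve: for all t, s ∈ ℝ, Ĥ(q(t),p(t)) = Ĥ(q(s),p(s)). -/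

import Mathlib

/-- The substituting Hamiltonian `Ĥ(q,p) = H(q,p) − Σᵢ Wᵢ(qᵢ)` is conserved along the
common phase curve of the dissipative system and the substituting conservative
system. -/
theorem substituting_hamiltonian_constant_along_phase_curve
    (n : ℕ) (H : (Fin n → ℝ) → (Fin n → ℝ) → ℝ)
    (hH : Differentiable ℝ (fun qp : (Fin n → ℝ) × (Fin n → ℝ) => H qp.1 qp.2))
    (q p : ℝ → Fin n → ℝ) (F : ℝ → Fin n → ℝ)
    (hp : ∀ (t : ℝ) (i : Fin n), HasDerivAt (fun s => p s i)
      (-(fderiv ℝ (fun x => H x (p t)) (q t) (Pi.single i 1)) + F t i) t)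
    (hq : ∀ (t : ℝ) (i : Fin n), HasDerivAt (fun s => q s i)
      (fderiv ℝ (fun y => H (q t) y) (p t) (Pi.single i 1)) t)
    (W : Fin n → ℝ → ℝ) (hW : ∀ i, Differentiable ℝ (W i))
    (hWF : ∀ (t : ℝ) (i : Fin n), deriv (W i) (q t i) = F t i)
    (Hhat : (Fin n → ℝ) → (Fin n → ℝ) → ℝ)
    (hHhat : ∀ a b, Hhat a b = H a b - ∑ i, W i (a i)) :
    ∀ t s : ℝ, Hhat (q t) (p t) = Hhat (q s) (p s) := by
  set f : (Fin n → ℝ) × (Fin n → ℝ) → ℝ := fun qp => H qp.1 qp.2 with hf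
  have key : ∀ t : ℝ, HasDerivAt (fun u => Hhat (q u) (p u)) 0 t := by
    intro t
    set D := fderiv ℝ f (q t, p t) with hDdef
    set a : Fin n → ℝ := fun i => D (Pi.single i 1, 0) with ha
    set b : Fin n → ℝ := fun i => D (0, Pi.single i 1) with hb
    -- partial derivatives in terms of D
    have hDq : ∀ v : Fin n → ℝ,
        fderiv ℝ (fun x => H x (p t)) (q t) v = D (v, 0) := by
      intro v
      have h1 : HasFDerivAt (fun x : Fin n → ℝ => (x, p t))
          (ContinuousLinearMap.inl ℝ (Fin n → ℝ) (Fin n → ℝ)) (q t) :=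
        HasFDerivAt.prodMk (hasFDerivAt_id _) (hasFDerivAt_const _ _)
      have h2 : HasFDerivAt (fun x : Fin n → ℝ => f (x, p t))
          (D.comp (ContinuousLinearMap.inl ℝ (Fin n → ℝ) (Fin n → ℝ))) (q t) :=
        by exact ((hH (q t, p t)).hasFDerivAt).comp (q t) h1
      have := h2.fderiv
      calc fderiv ℝ (fun x => H x (p t)) (q t) v
          = fderiv ℝ (fun x : Fin n → ℝ => f (x, p t)) (q t) v := rfl
        _ = (D.comp (ContinuousLinearMap.inl ℝ (Fin n → ℝ) (Fin n → ℝ))) v := by rw [this]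
        _ = D (v, 0) := rfl
    have hDp : ∀ w : Fin n → ℝ,
        fderiv ℝ (fun y => H (q t) y) (p t) w = D (0, w) := by
      intro w
      have h1 : HasFDerivAt (fun y : Fin n → ℝ => (q t, y))
          (ContinuousLinearMap.inr ℝ (Fin n → ℝ) (Fin n → ℝ)) (p t) :=
        HasFDerivAt.prodMk (hasFDerivAt_const _ _) (hasFDerivAt_id _)
      have h2 : HasFDerivAt (fun y : Fin n → ℝ => f (q t, y))
          (D.comp (ContinuousLinearMap.inr ℝ (Fin n → ℝ) (Fin n → ℝ))) (p t) :=
        by exact ((hH (q t, p t)).hasFDerivAt).comp (p t) h1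
      have := h2.fderiv
      calc fderiv ℝ (fun y => H (q t) y) (p t) w
          = fderiv ℝ (fun y : Fin n → ℝ => f (q t, y)) (p t) w := rfl
        _ = (D.comp (ContinuousLinearMap.inr ℝ (Fin n → ℝ) (Fin n → ℝ))) w := by rw [this]
        _ = D (0, w) := rfl
    -- decomposition of D on an arbitrary vector
    have hD : ∀ v w : Fin n → ℝ,
        D (v, w) = ∑ i, v i * a i + ∑ i, w i * b i := by
      intro v w
      have hv : (v, w) = (∑ i, v i • ((Pi.single i 1 : Fin n → ℝ), (0 : Fin n → ℝ)))
          + (∑ i, w i • ((0 : Fin n → ℝ), (Pi.single i 1 : Fin n → ℝ))) := by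
        refine Prod.ext ?_ ?_ <;>
          · simp only [Prod.fst_sum, Prod.snd_sum, Prod.smul_mk, Prod.fst_add, Prod.snd_add,
              smul_zero, Finset.sum_const_zero]
            funext j
            simp [Pi.single_apply, Finset.sum_ite_eq']
      rw [hv, map_add, map_sum, map_sum]
      congr 1 <;> exact Finset.sum_congr rfl fun i _ => by rw [map_smul]; rfl
    -- derivatives of the curves
    have hq' : HasDerivAt q b t := by
      have := hasDerivAt_pi.2 (fun i => hq t i)
      refine this.congr_deriv (Eq.symm ?_)
      funext i
      rw [hb]
      exact (hDp (Pi.single i 1)).symm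
    have hp' : HasDerivAt p (fun i => -a i + F t i) t := by
      have := hasDerivAt_pi.2 (fun i => hp t i)
      refine this.congr_deriv (Eq.symm ?_)
      funext i
      simp only [ha]
      rw [hDq (Pi.single i 1)]
    -- derivative of H along the curve
    have hHcurve : HasDerivAt (fun u => H (q u) (p u)) (D (b, fun i => -a i + F t i)) t := by
      have hcomp : HasDerivAt (fun u => (q u, p u)) (b, fun i => -a i + F t i) t :=
        hq'.prodMk hp'
      exact ((hH (q t, p t)).hasFDerivAt).comp_hasDerivAt t hcomp
    -- derivative of the potential sum
    have hWs : HasDerivAt (fun u => ∑ i, W i (q u i)) (∑ i, F t i * b i) t := by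
      refine HasDerivAt.fun_sum (fun i _ => ?_)
      have h1 : HasDerivAt (W i) (deriv (W i) (q t i)) (q t i) :=
        ((hW i) (q t i)).hasDerivAt
      have h2 : HasDerivAt (fun u => q u i) (b i) t := by
        have := hq t i
        convert this using 1
        rw [hb]; exact (hDp (Pi.single i 1)).symm
      have := h1.comp t h2
      rwa [hWF t i] at this
    have htotal : HasDerivAt (fun u => Hhat (q u) (p u))
        (D (b, fun i => -a i + F t i) - ∑ i, F t i * b i) t := by
      have := hHcurve.fun_sub hWs
      convert this using 2 <;> first | rfl | exact hHhat _ _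
    convert htotal using 1
    rw [hD]
    have : ∀ i ∈ Finset.univ, (fun i => -a i + F t i) i * b i = -(b i * a i) + F t i * b i := by
      intro i _; ring
    rw [Finset.sum_congr rfl this, Finset.sum_add_distrib, Finset.sum_neg_distrib]
    ring
  intro t s
  have hdiff : Differentiable ℝ (fun u => Hhat (q u) (p u)) :=
    fun u => (key u).differentiableAt
  have hzero : ∀ u, deriv (fun u => Hhat (q u) (p u)) u = 0 :=
    fun u => (key u).deriv
  exact is_const_of_deriv_eq_zero hdiff hzero t s
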